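/- Let α > 0, 0 < c < 1, and let w be a real number with c·e^{|w|} < 1. Then the exponential generating function of the moments of the Meixner weight satisfies Σ_{n=0}^∞ μ_n(c)·w^n/n! = (1 − c·e^w)^{−α}, where μ_n(c) = Σ_{x=0}^∞ x^n·(α)_x·c^x/x! and (1 − c·e^w)^{−α} denotes the real power. -/

import Mathlib

open Real Filter Topology

/-- The Pochhammer symbol (rising factorial) `(a)_x = a (a+1) ⋯ (a+x-1)`. -/
def poch (a : ℝ) (x : ℕ) : ℝ := ∏ i ∈ Finset.range x, (a + i)

lemma poch_succ (a : ℝ) (x : ℕ) : poch a (x + 1) = poch a x * (a + x) := by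
  simp [poch, Finset.prod_range_succ]

lemma poch_pos {a : ℝ} (ha : 0 < a) (x : ℕ) : 0 < poch a x :=
  Finset.prod_pos fun i _ => by positivity

lemma poch_shift (a : ℝ) (y : ℕ) : poch a (y + 1) = a * poch (a + 1) y := by
  rw [poch, Finset.prod_range_succ', poch]
  push_cast
  rw [add_zero, mul_comm]
  exact congrArg (a * ·) (Finset.prod_congr rfl fun i _ => by ring)

lemma tendsto_aux (a : ℝ) : Tendsto (fun x : ℕ => (a + x) / (x + 1)) atTop (𝓝 1) := by
  have h : ∀ x : ℕ, (a + x) / (x + 1) = (a - 1) * (1 / (x + 1)) + 1 := by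
    intro x
    have hx : (x : ℝ) + 1 ≠ 0 := by positivity
    field_simp
    ring
  simp_rw [h]
  simpa using (tendsto_one_div_add_atTop_nhds_zero_nat.const_mul (a - 1)).add
    (tendsto_const_nhds (x := (1:ℝ)))

lemma summable_poch (a : ℝ) (ha : 0 < a) {r : ℝ} (hr : |r| < 1) :
    Summable fun x : ℕ => poch a x * r ^ x / x.factorial := by
  rcases eq_or_ne r 0 with h0 | h0
  · subst h0
    apply summable_of_ne_finset_zero (s := {0})
    intro x hx
    simp only [Finset.mem_singleton] at hx
    simp [zero_pow hx]
  · have hne : ∀ x : ℕ, poch a x * r ^ x / x.factorial ≠ 0 := fun x =>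
      div_ne_zero (mul_ne_zero (poch_pos ha x).ne' (pow_ne_zero _ h0))
        (Nat.cast_ne_zero.mpr x.factorial_ne_zero)
    refine summable_of_ratio_test_tendsto_lt_one hr (Filter.Eventually.of_forall hne) ?_
    have heq : ∀ x : ℕ, ‖poch a (x + 1) * r ^ (x + 1) / (x + 1).factorial‖ /
        ‖poch a x * r ^ x / x.factorial‖ = (a + x) / (x + 1) * |r| := by
      intro x
      have hp := poch_pos ha x
      have hp1 := poch_pos ha (x + 1)
      have hfx : (0:ℝ) < x.factorial := by positivity
      have hrx : (0:ℝ) < |r| ^ x := pow_pos (abs_pos.mpr h0) x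
      rw [Real.norm_eq_abs, Real.norm_eq_abs, abs_div, abs_div, abs_mul, abs_mul,
        abs_pow, abs_pow, abs_of_pos hp, abs_of_pos hp1,
        Nat.abs_cast, Nat.abs_cast, poch_succ, Nat.factorial_succ]
      push_cast
      rw [pow_succ]
      field_simp
    simp_rw [heq]
    simpa using (tendsto_aux a).mul_const |r|

lemma summable_shift (a : ℝ) (ha : 0 < a) {r : ℝ} (hr : |r| < 1) :
    Summable fun y : ℕ => poch a (y + 1) * r ^ y / y.factorial := by
  have := (summable_poch (a + 1) (by linarith) hr).mul_left a
  refine this.congr fun y => ?_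
  rw [poch_shift]
  ring

lemma hasSum_binomial (a : ℝ) (ha : 0 < a) {t : ℝ} (ht : |t| < 1) :
    HasSum (fun x : ℕ => poch a x * t ^ x / x.factorial) ((1 - t) ^ (-a)) := by
  set F : ℝ → ℝ := fun s => ∑' x : ℕ, poch a x * s ^ x / x.factorial with hF
  set D : ℝ → ℝ := fun s => ∑' x : ℕ, poch a (x + 1) * s ^ x / x.factorial with hD
  -- derivative of F on Ioo (-1) 1
  have hderiv : ∀ s ∈ Set.Ioo (-1 : ℝ) 1, HasDerivAt F (D s) s := by
    intro s hs
    have hs' : |s| < 1 := abs_lt.mpr ⟨hs.1, hs.2⟩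
    set r : ℝ := (1 + |s|) / 2 with hrdef
    have hsr : |s| < r := by rw [hrdef]; linarith [abs_nonneg s]
    have hr1 : r < 1 := by rw [hrdef]; linarith
    have hr0 : 0 < r := by rw [hrdef]; positivity
    have hrabs : |r| < 1 := by rwa [abs_of_pos hr0]
    set u : ℕ → ℝ := fun x => poch a x * x * r ^ (x - 1) / x.factorial with hu
    have hu_sum : Summable u := by
      rw [← summable_nat_add_iff 1]
      refine (summable_shift a ha hrabs).congr fun y => ?_
      rw [hu]
      simp only [Nat.add_sub_cancel, Nat.factorial_succ]
      push_cast
      have h1 : ((y : ℝ) + 1) ≠ 0 := by positivity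
      field_simp
    have hg : ∀ (x : ℕ) (y : ℝ),
        HasDerivAt (fun z => poch a x * z ^ x / x.factorial)
          (poch a x * (x * y ^ (x - 1)) / x.factorial) y := fun x y =>
      ((hasDerivAt_pow x y).const_mul (poch a x)).div_const _
    have hbound : ∀ (x : ℕ) (y : ℝ), y ∈ Set.Ioo (-r) r →
        ‖poch a x * (x * y ^ (x - 1)) / x.factorial‖ ≤ u x := by
      intro x y hy
      have hyr : |y| ≤ r := le_of_lt (abs_lt.mpr ⟨hy.1, hy.2⟩)
      rw [norm_div, norm_mul, norm_mul, norm_pow, Real.norm_natCast, Real.norm_natCast,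
        Real.norm_eq_abs (poch a x), abs_of_pos (poch_pos ha x), Real.norm_eq_abs y, hu]
      rw [div_le_div_iff_of_pos_right (by positivity)]
      rw [← mul_assoc]
      exact mul_le_mul_of_nonneg_left (pow_le_pow_left₀ (abs_nonneg y) hyr _)
        (mul_nonneg (poch_pos ha x).le (Nat.cast_nonneg x))
    have key := hasDerivAt_tsum_of_isPreconnected hu_sum (isOpen_Ioo (a := -r) (b := r))
      (convex_Ioo _ _).isPreconnected (fun x y _ => hg x y) (fun x y hy => hbound x y hy)
      (Set.mem_Ioo.mpr ⟨by linarith, hr0⟩)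
      (by simpa using (summable_poch a ha (by simp : |(0:ℝ)| < 1)))
      (Set.mem_Ioo.mpr ⟨by cases abs_lt.mp hsr; linarith, (abs_lt.mp hsr).2⟩)
    -- identify the derivative value with D s
    have hsum' : Summable fun x : ℕ => poch a x * ((x : ℝ) * s ^ (x - 1)) / x.factorial := by
      refine Summable.of_norm_bounded hu_sum fun x => ?_
      exact hbound x s (Set.mem_Ioo.mpr (abs_lt.mp hsr))
    have hval : (∑' x : ℕ, poch a x * ((x : ℝ) * s ^ (x - 1)) / x.factorial) = D s := by
      rw [Summable.tsum_eq_zero_add hsum']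
      simp only [Nat.cast_zero, zero_mul, mul_zero, zero_div, zero_add]
      rw [hD]
      refine tsum_congr fun x => ?_
      simp only [Nat.add_sub_cancel, Nat.factorial_succ]
      push_cast
      have h1 : ((x : ℝ) + 1) ≠ 0 := by positivity
      field_simp
    rw [← hval]
    exact key
  -- the ODE: (1-s) * D s = a * F s on Ioo(-1,1)
  have hODE : ∀ s ∈ Set.Ioo (-1:ℝ) 1, (1 - s) * D s = a * F s := by
    intro s hs
    have hs' : |s| < 1 := abs_lt.mpr ⟨hs.1, hs.2⟩
    have hA : HasSum (fun x : ℕ => poch a (x + 1) * s ^ x / x.factorial) (D s) :=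
      (summable_shift a ha hs').hasSum
    have hB : HasSum (fun x : ℕ => (x : ℝ) * poch a x * s ^ x / x.factorial) (s * D s) := by
      have h1 : HasSum (fun x : ℕ =>
          ((x + 1 : ℕ) : ℝ) * poch a (x + 1) * s ^ (x + 1) / (x + 1).factorial) (s * D s) := by
        have heq : (fun x : ℕ =>
            ((x + 1 : ℕ) : ℝ) * poch a (x + 1) * s ^ (x + 1) / (x + 1).factorial)
            = fun x : ℕ => s * (poch a (x + 1) * s ^ x / x.factorial) := by
          funext x
          rw [Nat.factorial_succ, pow_succ]
          push_cast
          have h1 : ((x : ℝ) + 1) ≠ 0 := by positivity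
          field_simp
        rw [heq]
        exact hA.mul_left s
      have h2 := (hasSum_nat_add_iff
        (f := fun x : ℕ => (x : ℝ) * poch a x * s ^ x / x.factorial) 1).mp h1
      simpa using h2
    have hC : HasSum (fun x : ℕ => a * (poch a x * s ^ x / x.factorial)) (D s - s * D s) := by
      have heq : (fun x : ℕ => a * (poch a x * s ^ x / x.factorial))
          = fun x : ℕ => poch a (x + 1) * s ^ x / x.factorial
            - (x : ℝ) * poch a x * s ^ x / x.factorial := by
        funext x
        rw [poch_succ]
        have hfx : ((x.factorial : ℝ)) ≠ 0 := by positivity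
        field_simp
        ring
      rw [heq]
      exact hA.sub hB
    have hC' : HasSum (fun x : ℕ => a * (poch a x * s ^ x / x.factorial)) (a * F s) :=
      (summable_poch a ha hs').hasSum.mul_left a
    have huniq := hC.unique hC'
    linarith [huniq]
  -- constancy of (1-s)^a * F s
  have h0mem : (0:ℝ) ∈ Set.Ioo (-1:ℝ) 1 := by norm_num
  have hF0 : F 0 = 1 := by
    have : F 0 = ∑' x : ℕ, poch a x * (0:ℝ) ^ x / x.factorial := rfl
    rw [this, tsum_eq_single 0 (fun x hx => by simp [zero_pow hx])]
    simp [poch]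
  have hd : ∀ s ∈ Set.Ioo (-1:ℝ) 1, HasDerivAt (fun z => (1 - z) ^ a * F z) 0 s := by
    intro s hs
    have h1s : 0 < 1 - s := by linarith [hs.2]
    have hrpow : HasDerivAt (fun z : ℝ => (1 - z) ^ a) (a * (1 - s) ^ (a - 1) * (-1)) s := by
      have houter := Real.hasDerivAt_rpow_const (x := 1 - s) (p := a) (Or.inl h1s.ne')
      have hinner : HasDerivAt (fun z : ℝ => 1 - z) (-1) s := (hasDerivAt_id s).const_sub 1
      exact houter.comp s hinner
    have hmul := hrpow.mul (hderiv s hs)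
    refine HasDerivAt.congr_deriv (f := fun z => (1 - z) ^ a * F z) hmul ?_
    symm
    have key := hODE s hs
    have hpow : (1 - s) ^ a = (1 - s) ^ (a - 1) * (1 - s) := by
      rw [← Real.rpow_add_one h1s.ne' (a - 1)]
      norm_num
    rw [hpow]
    linear_combination (-((1 - s) ^ (a - 1))) * key
  have hconst : (1 - t) ^ a * F t = 1 := by
    have hdiff : DifferentiableOn ℝ (fun z => (1 - z) ^ a * F z) (Set.Ioo (-1:ℝ) 1) :=
      fun z hz => ((hd z hz).differentiableAt).differentiableWithinAt
    have hcz : ∀ z ∈ Set.Ioo (-1:ℝ) 1,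
        fderivWithin ℝ (fun z => (1 - z) ^ a * F z) (Set.Ioo (-1:ℝ) 1) z = 0 := by
      intro z hz
      rw [fderivWithin_of_isOpen isOpen_Ioo hz, (hd z hz).hasFDerivAt.fderiv]
      ext
      simp

    have hcc := (convex_Ioo (-1:ℝ) 1).is_const_of_fderivWithin_eq_zero hdiff hcz
      (Set.mem_Ioo.mpr (abs_lt.mp ht)) h0mem
    rw [hcc, hF0]
    norm_num
  have h1t : 0 < 1 - t := by linarith [(abs_lt.mp ht).2]
  have hFt : F t = (1 - t) ^ (-a) := by
    rw [Real.rpow_neg h1t.le]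
    exact eq_inv_of_mul_eq_one_left (by rw [mul_comm]; exact hconst)
  have hfin := (summable_poch a ha ht).hasSum
  have : F t = ∑' x : ℕ, poch a x * t ^ x / x.factorial := rfl
  rw [this] at hFt
  rwa [hFt] at hfin

/-- The exponential generating function of the Meixner moments:
`Σ_n μ_n(c) w^n/n! = (1 - c e^w)^{-α}` when `c e^{|w|} < 1`. -/
theorem meixner_moments_egf
    (α c w : ℝ) (hα : 0 < α) (hc : 0 < c) (hc1 : c < 1)
    (hw : c * Real.exp |w| < 1)
    (mu : ℕ → ℝ → ℝ)
    (hmu : ∀ (n : ℕ) (t : ℝ),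
      mu n t = ∑' x : ℕ, (x : ℝ) ^ n * poch α x * t ^ x / x.factorial) :
    HasSum (fun n : ℕ => mu n c * w ^ n / n.factorial)
      ((1 - c * Real.exp w) ^ (-α)) := by
  set t0 : ℝ := c * Real.exp |w| with ht0def
  set t : ℝ := c * Real.exp w with htdef
  have ht0pos : 0 < t0 := mul_pos hc (Real.exp_pos _)
  have htpos : 0 < t := mul_pos hc (Real.exp_pos _)
  have htle : t ≤ t0 :=
    mul_le_mul_of_nonneg_left (Real.exp_le_exp.mpr (le_abs_self w)) hc.le
  have ht0abs : |t0| < 1 := by rw [abs_of_pos ht0pos]; exact hw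
  have htabs : |t| < 1 := by rw [abs_of_pos htpos]; linarith
  set f : ℕ × ℕ → ℝ := fun p =>
    poch α p.1 * c ^ p.1 / p.1.factorial * (((p.1 : ℝ) * w) ^ p.2 / p.2.factorial) with hfdef
  have habs : ∀ p : ℕ × ℕ, |f p| =
      poch α p.1 * c ^ p.1 / p.1.factorial * (((p.1 : ℝ) * |w|) ^ p.2 / p.2.factorial) := by
    intro p
    have hA : 0 ≤ poch α p.1 * c ^ p.1 / p.1.factorial := by
      have := (poch_pos hα p.1).le
      positivity
    rw [hfdef]
    simp only
    rw [abs_mul, abs_of_nonneg hA, abs_div, abs_pow, abs_mul, Nat.abs_cast, Nat.abs_cast]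
  have hfib0 : ∀ x : ℕ, (∑' n : ℕ, |f (x, n)|) = poch α x * t0 ^ x / x.factorial := by
    intro x
    have h1 := (NormedSpace.expSeries_div_hasSum_exp ((x : ℝ) * |w|)).mul_left
      (poch α x * c ^ x / x.factorial)
    calc (∑' n : ℕ, |f (x, n)|)
        = ∑' n : ℕ, poch α x * c ^ x / x.factorial * (((x : ℝ) * |w|) ^ n / n.factorial) :=
          tsum_congr fun n => habs (x, n)
      _ = poch α x * c ^ x / x.factorial * NormedSpace.exp ((x : ℝ) * |w|) := h1.tsum_eq
      _ = poch α x * t0 ^ x / x.factorial := by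
          rw [← Real.exp_eq_exp_ℝ, Real.exp_nat_mul, ht0def, mul_pow]
          ring
  have hsum_abs : Summable fun p : ℕ × ℕ => |f p| := by
    refine (summable_prod_of_nonneg fun p => abs_nonneg _).mpr ⟨fun x => ?_, ?_⟩
    · have h1 := ((NormedSpace.expSeries_div_hasSum_exp ((x : ℝ) * |w|)).summable).mul_left
        (poch α x * c ^ x / x.factorial)
      exact h1.congr fun n => (habs (x, n)).symm
    · exact ((hasSum_binomial α hα ht0abs).summable).congr fun x => (hfib0 x).symm
  have hsumf : Summable f := hsum_abs.of_abs
  have hf := hsumf.hasSum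
  have hfiber1 : ∀ x : ℕ, HasSum (fun n => f (x, n)) (poch α x * t ^ x / x.factorial) := by
    intro x
    have h1 := (NormedSpace.expSeries_div_hasSum_exp ((x : ℝ) * w)).mul_left
      (poch α x * c ^ x / x.factorial)
    have h2 : poch α x * c ^ x / x.factorial * NormedSpace.exp ((x : ℝ) * w)
        = poch α x * t ^ x / x.factorial := by
      rw [← Real.exp_eq_exp_ℝ, Real.exp_nat_mul, htdef, mul_pow]
      ring
    rw [← h2]
    exact h1
  have hS1 : HasSum (fun x : ℕ => poch α x * t ^ x / x.factorial) (∑' p, f p) :=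
    hf.prod_fiberwise hfiber1
  have hSval : (∑' p, f p) = (1 - t) ^ (-α) := hS1.unique (hasSum_binomial α hα htabs)
  have hswap : HasSum (f ∘ ⇑(Equiv.prodComm ℕ ℕ)) (∑' p, f p) :=
    ((Equiv.prodComm ℕ ℕ).hasSum_iff).mpr hf
  have hfiber2 : ∀ n : ℕ, HasSum (fun x : ℕ => f (x, n)) (mu n c * w ^ n / n.factorial) := by
    intro n
    have hsx : Summable fun x : ℕ => f (x, n) :=
      hsumf.comp_injective fun a b hab => (Prod.ext_iff.mp hab).1
    have h2 := hsx.hasSum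
    have h3 : (∑' x : ℕ, f (x, n)) = mu n c * w ^ n / n.factorial := by
      calc (∑' x : ℕ, f (x, n))
          = ∑' x : ℕ, ((x : ℝ) ^ n * poch α x * c ^ x / x.factorial) * (w ^ n / n.factorial) := by
            refine tsum_congr fun x => ?_
            rw [hfdef]
            simp only
            rw [mul_pow]
            ring
        _ = (∑' x : ℕ, (x : ℝ) ^ n * poch α x * c ^ x / x.factorial) * (w ^ n / n.factorial) :=
            tsum_mul_right
        _ = mu n c * w ^ n / n.factorial := by
            rw [← hmu n c]
            ring
    rwa [h3] at h2
  exact hSval ▸ hswap.prod_fiberwise hfiber2
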